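/- Let K ⊆ ℝ be compact and let P : ℝ → Hom(B, B) be a continuous map into the bounded operators on a Banach space B such that the spectral radius ρ(P(t)) < 1 for every t ∈ K. Then there exist constants C > 0 and 0 < r < 1 such that ‖P(t)^n‖ ≤ C r^n for all t ∈ K and all n ∈ ℕ. -/

import Mathlib

open Filter Topology

lemma aux_pow_norm_le {B : Type*} [NormedAddCommGroup B] [NormedSpace ℂ B]
    {x : B →L[ℂ] B} {a : ℝ} (ha : 0 ≤ a) (hx : ‖x‖ ≤ a) (k : ℕ) : ‖x ^ k‖ ≤ a ^ k := by
  induction k with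
  | zero => rw [pow_zero, pow_zero]; exact ContinuousLinearMap.norm_id_le
  | succ k ih =>
    rw [pow_succ, pow_succ]
    exact le_trans (norm_mul_le _ _) (mul_le_mul ih hx (norm_nonneg _) (pow_nonneg ha _))

lemma aux_exists_pow_norm_lt_one {B : Type*} [NormedAddCommGroup B] [NormedSpace ℂ B]
    [CompleteSpace B] (a : B →L[ℂ] B) (h : spectralRadius ℂ a < 1) :
    ∃ n : ℕ, 1 ≤ n ∧ ‖a ^ n‖ < 1 := by
  have hG := spectrum.pow_norm_pow_one_div_tendsto_nhds_spectralRadius a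
  have hev : ∀ᶠ n : ℕ in atTop, ENNReal.ofReal (‖a ^ n‖ ^ (1 / (n : ℝ))) < 1 :=
    hG.eventually_lt_const h
  obtain ⟨n, hn, hn1⟩ := (hev.and (eventually_ge_atTop 1)).exists
  refine ⟨n, hn1, ?_⟩
  rw [ENNReal.ofReal_lt_one] at hn
  have hn0 : (n : ℝ) ≠ 0 := by positivity
  have : ‖a ^ n‖ = (‖a ^ n‖ ^ (1 / (n : ℝ))) ^ n := by
    rw [← Real.rpow_natCast (‖a ^ n‖ ^ (1 / (n : ℝ))) n, ← Real.rpow_mul (norm_nonneg _)]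
    rw [one_div, inv_mul_cancel₀ hn0, Real.rpow_one]
  rw [this]
  exact pow_lt_one₀ (Real.rpow_nonneg (norm_nonneg _) _) hn (by omega)

theorem uniform_power_decay_on_compact {B : Type*} [NormedAddCommGroup B]
    [NormedSpace ℂ B] [CompleteSpace B] (K : Set ℝ) (hK : IsCompact K)
    (P : ℝ → B →L[ℂ] B) (hP : Continuous P)
    (hρ : ∀ t ∈ K, spectralRadius ℂ (P t) < 1) :
    ∃ C > 0, ∃ r : ℝ, 0 < r ∧ r < 1 ∧ ∀ t ∈ K, ∀ n : ℕ, ‖(P t) ^ n‖ ≤ C * r ^ n := by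
  rcases K.eq_empty_or_nonempty with hKe | hKne
  · exact ⟨1, one_pos, 1/2, by norm_num, by norm_num, by simp [hKe]⟩
  -- choose powers
  have hch : ∀ t ∈ K, ∃ n : ℕ, 1 ≤ n ∧ ‖(P t) ^ n‖ < 1 :=
    fun t ht => aux_exists_pow_norm_lt_one (P t) (hρ t ht)
  choose! n hn1 hnlt using hch
  set c : ℝ → ℝ := fun t => (1 + ‖(P t) ^ (n t)‖) / 2 with hc_def
  have hc_pos : ∀ t, 0 < c t := fun t => by
    have := norm_nonneg ((P t) ^ (n t)); simp only [hc_def]; linarith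
  have hc_lt_one : ∀ t ∈ K, c t < 1 := fun t ht => by
    have := hnlt t ht; simp only [hc_def]; linarith
  have hself : ∀ t ∈ K, ‖(P t) ^ (n t)‖ < c t := fun t ht => by
    have := hnlt t ht; simp only [hc_def]; linarith
  have hcont : ∀ k : ℕ, Continuous fun s => ‖(P s) ^ k‖ := fun k => (hP.pow k).norm
  -- nbhd cover
  obtain ⟨F, hFK, hFcov⟩ := hK.elim_nhds_subcover (fun t => {s | ‖(P s) ^ (n t)‖ < c t})
    (fun t ht => ((isOpen_lt (hcont (n t)) continuous_const).mem_nhds (hself t ht)))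
  have hFne : F.Nonempty := by
    obtain ⟨t0, ht0⟩ := hKne
    obtain ⟨i, hi, -⟩ := Set.mem_iUnion₂.mp (hFcov ht0)
    exact ⟨i, hi⟩
  -- uniform norm bound
  obtain ⟨M0, hM0⟩ := hK.exists_bound_of_continuousOn hP.continuousOn
  set M : ℝ := max M0 1 with hM_def
  have hM1 : (1 : ℝ) ≤ M := le_max_right _ _
  have hMb : ∀ t ∈ K, ‖P t‖ ≤ M := fun t ht => le_trans (hM0 t ht) (le_max_left _ _)
  -- single power N
  set N : ℕ := ∏ i ∈ F, n i with hN_def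
  have hnpos : ∀ i ∈ F, 0 < n i := fun i hi => hn1 i (hFK i hi)
  have hNpos : 0 < N := Finset.prod_pos hnpos
  have hdvd : ∀ i ∈ F, n i ∣ N := fun i hi => Finset.dvd_prod_of_mem n hi
  have hkpos : ∀ i ∈ F, 0 < N / n i := fun i hi =>
    Nat.div_pos (Nat.le_of_dvd hNpos (hdvd i hi)) (hnpos i hi)
  set c0 : ℝ := F.sup' hFne (fun i => (c i) ^ (N / n i)) with hc0_def
  have hc0_pos : 0 < c0 := by
    obtain ⟨i, hi⟩ := hFne
    rw [hc0_def]
    exact lt_of_lt_of_le (pow_pos (hc_pos i) _) (Finset.le_sup' (fun j => (c j) ^ (N / n j)) hi)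
  have hc0_lt : c0 < 1 := by
    rw [hc0_def, Finset.sup'_lt_iff]
    intro i hi
    exact pow_lt_one₀ (hc_pos i).le (hc_lt_one i (hFK i hi)) (hkpos i hi).ne'
  have hkey : ∀ s ∈ K, ‖(P s) ^ N‖ ≤ c0 := by
    intro s hs
    obtain ⟨i, hi, his⟩ := Set.mem_iUnion₂.mp (hFcov hs)
    have hNi : n i * (N / n i) = N := Nat.mul_div_cancel' (hdvd i hi)
    calc ‖(P s) ^ N‖ = ‖((P s) ^ (n i)) ^ (N / n i)‖ := by rw [← pow_mul, hNi]
      _ ≤ (c i) ^ (N / n i) :=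
          aux_pow_norm_le (hc_pos i).le (le_of_lt his) _
      _ ≤ c0 := by rw [hc0_def]; exact Finset.le_sup' (fun j => (c j) ^ (N / n j)) hi
  -- define r and C
  set r : ℝ := c0 ^ ((N : ℝ)⁻¹) with hr_def
  have hr_pos : 0 < r := Real.rpow_pos_of_pos hc0_pos _
  have hr_lt : r < 1 := Real.rpow_lt_one hc0_pos.le hc0_lt (by positivity)
  have hrN : r ^ N = c0 := Real.rpow_inv_natCast_pow hc0_pos.le hNpos.ne'
  have hMr : 1 ≤ M / r := (one_le_div hr_pos).mpr (le_trans hr_lt.le hM1)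
  refine ⟨(M / r) ^ N, pow_pos (lt_of_lt_of_le one_pos hMr) _, r, hr_pos, hr_lt, ?_⟩
  intro t ht m
  set q := m / N with hq_def
  set p := m % N with hp_def
  have hm : m = N * q + p := (Nat.div_add_mod m N).symm
  have hpN : p ≤ N := (Nat.mod_lt m hNpos).le
  have h1 : ‖(P t) ^ m‖ ≤ c0 ^ q * M ^ p := by
    rw [hm, pow_add, pow_mul]
    exact le_trans (norm_mul_le _ _)
      (mul_le_mul (aux_pow_norm_le hc0_pos.le (hkey t ht) q)
        (aux_pow_norm_le (le_trans one_pos.le hM1) (hMb t ht) p)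
        (norm_nonneg _) (pow_nonneg hc0_pos.le _))
  refine le_trans h1 ?_
  have hMp : M ^ p = (M / r) ^ p * r ^ p := by
    rw [← mul_pow, div_mul_cancel₀ _ hr_pos.ne']
  have h2 : (M / r) ^ p ≤ (M / r) ^ N := pow_le_pow_right₀ hMr hpN
  calc c0 ^ q * M ^ p = r ^ (N * q) * ((M / r) ^ p * r ^ p) := by
        rw [← hrN, ← pow_mul, hMp]
    _ ≤ r ^ (N * q) * ((M / r) ^ N * r ^ p) := by
        gcongr
    _ = (M / r) ^ N * r ^ m := by rw [hm, pow_add]; ring
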